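/- Let H be a Hilbert space, S an orthogonal projection onto a closed subspace V, H' a bounded operator with range in V restricting to the identity on V, and A = H'* − H'. Then S(I − A) = H'; consequently, if ‖A‖ < 1 then S = H' (I − A)^{-1} = ∑_{j=0}^∞ H' A^j, with the Neumann series converging in operator norm. -/
import Mathlib

open ContinuousLinearMap

/-- Kerzman–Stein expansion: with `S` the orthogonal projection onto the closed subspace
`V`, `H'` bounded with range in `V` fixing `V`, and `A = H'* − H'`, one has
`S(I − A) = H'`; consequently, if `‖A‖ < 1` then `S = ∑_{j=0}^∞ H' Aʲ`, the Neumann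
series converging in operator norm. -/
theorem kerzman_stein_expansion
    (H : Type*) [NormedAddCommGroup H] [InnerProductSpace ℂ H] [CompleteSpace H]
    (V : Submodule ℂ H) (hV : IsClosed (V : Set H))
    (S H' : H →L[ℂ] H)
    (hSrange : ∀ x : H, S x ∈ V) (hSfix : ∀ v ∈ V, S v = v)
    (hSadj : IsSelfAdjoint S)
    (hH'range : ∀ x : H, H' x ∈ V) (hH'fix : ∀ v ∈ V, H' v = v) :
    S ∘L (1 - (adjoint H' - H')) = H' ∧
      (‖adjoint H' - H'‖ < 1 →
        HasSum (fun j : ℕ => H' ∘L (adjoint H' - H') ^ j) S) := by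
  set A := adjoint H' - H' with hA
  have hSH' : S * H' = H' := by
    ext x; exact hSfix _ (hH'range x)
  have hH'S : H' * S = S := by
    ext x; exact hH'fix _ (hSrange x)
  have hSadj' : adjoint S = S := hSadj.adjoint_eq
  have hSH'a : S * adjoint H' = S := by
    have h := adjoint_comp H' S
    rw [show H' ∘L S = H' * S from rfl, hH'S, hSadj'] at h
    exact h.symm
  have key : S * (1 - A) = H' := by
    rw [mul_sub, mul_one, hA, mul_sub, hSH', hSH'a, sub_sub_cancel]
  refine ⟨key, fun hAn => ?_⟩
  have hgeom : HasSum (fun j : ℕ => A ^ j) (∑' i : ℕ, A ^ i) :=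
    (summable_geometric_of_norm_lt_one hAn).hasSum
  have hmul := hgeom.mul_left H'
  have : H' * ∑' i : ℕ, A ^ i = S := by
    rw [← key, mul_assoc, mul_neg_geom_series A hAn, mul_one]
  rwa [this] at hmul
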